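/- Consider the system Σ = (A,B,C,D; C, C², C) with A = 0 : C → C, B = [1, 0] : C² → C, C = 1 : C → C, D = [0, 0] : C² → C. Then the system matrix M(Σ) = [[0,1,0],[1,0,0]] is a co-isometry (M(Σ)M(Σ)* = I), Σ is minimal, its transfer function is θ(λ) = [λ, 0], and the operator δ_Σ(1) = I_{C²} − D*D − B*B equals diag(0,1), which is nonzero. -/

import Mathlib

open scoped InnerProductSpace

/-- The 2×2 block operator `[[a, b],[c, d]] : X ⊕ U → X ⊕ Y` between Hilbert space
orthogonal direct sums. -/
noncomputable def blk {X U Y : Type*}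
    [NormedAddCommGroup X] [InnerProductSpace ℂ X] [CompleteSpace X]
    [NormedAddCommGroup U] [InnerProductSpace ℂ U] [CompleteSpace U]
    [NormedAddCommGroup Y] [InnerProductSpace ℂ Y] [CompleteSpace Y]
    (a : X →L[ℂ] X) (b : U →L[ℂ] X) (c : X →L[ℂ] Y) (d : U →L[ℂ] Y) :
    WithLp 2 (X × U) →L[ℂ] WithLp 2 (X × Y) :=
  ((WithLp.prodContinuousLinearEquiv 2 ℂ X Y).symm : (X × Y) →L[ℂ] WithLp 2 (X × Y)).comp
    ((((a.comp (ContinuousLinearMap.fst ℂ X U)) + (b.comp (ContinuousLinearMap.snd ℂ X U))).prod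
      ((c.comp (ContinuousLinearMap.fst ℂ X U)) + (d.comp (ContinuousLinearMap.snd ℂ X U)))).comp
      ((WithLp.prodContinuousLinearEquiv 2 ℂ X U) : WithLp 2 (X × U) →L[ℂ] (X × U)))

set_option synthInstance.maxHeartbeats 400000 in
set_option maxHeartbeats 1000000 in
/-- For the system `Σ = (A,B,C,D; ℂ, ℂ², ℂ)` with `A = 0`, `B = [1, 0]`,
`C = 1`, `D = [0, 0]`: the system matrix `M(Σ)` is a co-isometry, `Σ` is minimal, its transfer
function is `θ(λ) = [λ, 0]`, and `δ_Σ(1) = I − D*D − B*B = diag(0,1) ≠ 0`. -/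
theorem statement19 :
    let A : ℂ →L[ℂ] ℂ := 0
    let B : EuclideanSpace ℂ (Fin 2) →L[ℂ] ℂ := EuclideanSpace.proj (0 : Fin 2)
    let C : ℂ →L[ℂ] ℂ := 1
    let D : EuclideanSpace ℂ (Fin 2) →L[ℂ] ℂ := 0
    ((blk A B C D).comp (blk A B C D).adjoint = 1) ∧
      ((Submodule.span ℂ
          (⋃ n : ℕ, Set.range (((A ^ n).comp B : EuclideanSpace ℂ (Fin 2) →L[ℂ] ℂ) :
            EuclideanSpace ℂ (Fin 2) → ℂ))).topologicalClosure = ⊤) ∧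
      ((⨅ n : ℕ, LinearMap.ker ((C.comp (A ^ n) : ℂ →L[ℂ] ℂ) : ℂ →ₗ[ℂ] ℂ)) = ⊥) ∧
      (∀ (lam : ℂ) (u : EuclideanSpace ℂ (Fin 2)),
        (D + lam • (C.comp ((Ring.inverse (1 - lam • A)).comp B))) u = lam * u 0) ∧
      (∀ (u : EuclideanSpace ℂ (Fin 2)) (i : Fin 2),
        ((1 - D.adjoint.comp D - B.adjoint.comp B) u) i = if i = 0 then 0 else u i) ∧
      (1 - D.adjoint.comp D - B.adjoint.comp B ≠ 0) := by
  intro A B C D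
  have hA : A = 0 := rfl
  have hC : C = 1 := rfl
  have hD : D = 0 := rfl
  set T : ℂ →L[ℂ] EuclideanSpace ℂ (Fin 2) :=
    ContinuousLinearMap.smulRight (1 : ℂ →L[ℂ] ℂ) (EuclideanSpace.single (0:Fin 2) (1:ℂ)) with hTdef
  have hT : T = B.adjoint := by
    rw [ContinuousLinearMap.eq_adjoint_iff]
    intro x y
    simp [hTdef, B, inner_smul_left, EuclideanSpace.inner_single_left, RCLike.inner_apply, mul_comm]
  have h5 : ∀ (u : EuclideanSpace ℂ (Fin 2)) (i : Fin 2),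
      ((1 - D.adjoint.comp D - B.adjoint.comp B) u) i = if i = 0 then 0 else u i := by
    intro u i
    rw [← hT]
    have hDD : (ContinuousLinearMap.adjoint D).comp D = 0 := by
      ext
      simp [hD]
    simp only [hDD, sub_zero, ContinuousLinearMap.sub_apply,
      ContinuousLinearMap.one_apply, ContinuousLinearMap.comp_apply, hTdef,
      ContinuousLinearMap.smulRight_apply, PiLp.sub_apply, PiLp.smul_apply]
    by_cases hi : i = 0
    · subst hi
      simp [B, EuclideanSpace.single_apply]
    · simp [hi, B, EuclideanSpace.single_apply]
  refine ⟨?_, ?_, ?_, ?_, h5, ?_⟩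
  · have hN : blk (0 : ℂ →L[ℂ] ℂ) (1 : ℂ →L[ℂ] ℂ) T (0 : ℂ →L[ℂ] EuclideanSpace ℂ (Fin 2))
        = (blk A B C D).adjoint := by
      rw [ContinuousLinearMap.eq_adjoint_iff]
      intro x y
      simp [blk, hTdef, hA, B, hC, hD, WithLp.prod_inner_apply, inner_smul_left, EuclideanSpace.inner_single_left,
        RCLike.inner_apply]
      ring
    rw [← hN]
    ext x
    simp [blk, hTdef, hA, B, hC, hD]
    rfl
  · have hspan : (Submodule.span ℂ
        (⋃ n : ℕ, Set.range (((A ^ n).comp B : EuclideanSpace ℂ (Fin 2) →L[ℂ] ℂ) :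
          EuclideanSpace ℂ (Fin 2) → ℂ))) = ⊤ := by
      rw [Submodule.eq_top_iff']
      intro x
      apply Submodule.subset_span
      apply Set.mem_iUnion.mpr
      refine ⟨0, EuclideanSpace.single 0 x, ?_⟩
      simp [B]
    rw [hspan]
    exact eq_top_iff.mpr (hspan ▸ hspan ▸ Submodule.le_topologicalClosure _)
  · refine le_bot_iff.mp (le_trans (iInf_le _ 0) ?_)
    have hck : C.comp (A ^ 0) = 1 := by
      rw [pow_zero, hC]
      ext
      rfl
    rw [hck]
    exact le_of_eq (LinearMap.ker_eq_bot'.mpr fun v hv => hv)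
  · intro lam u
    have h1 : (1 : ℂ →L[ℂ] ℂ) - lam • A = 1 := by
      ext
      simp [hA]
    rw [hD, h1, Ring.inverse_one]
    simp only [ContinuousLinearMap.add_apply, ContinuousLinearMap.zero_apply, zero_add,
      ContinuousLinearMap.smul_apply, ContinuousLinearMap.coe_smul', Pi.smul_apply,
      ContinuousLinearMap.comp_apply, ContinuousLinearMap.one_apply, hC]
    rw [smul_eq_mul]
    rfl
  · intro h
    have := h5 (EuclideanSpace.single 1 1) 1
    rw [h] at this
    simp [EuclideanSpace.single_apply] at this
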